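/- Let A : ℝ^d → ℝ^m be an affine map, let c : ℝ^d → ℝ be an affine function, and let α ≥ 0. Then the set { x ∈ ℝ^d : c(x) > 0 and ‖A(x)‖ ≤ α · c(x) } is convex, where ‖·‖ is the Euclidean norm on ℝ^m. Consequently, the function x ↦ ‖A(x)‖ / c(x) is quasiconvex on the convex open half-space { x : c(x) > 0 }: each of its sublevel sets within that region is convex. (This covers both the multiple-view reprojection error and the homography transfer error.) -/
import Mathlib


/-- For an affine map `A : ℝ^d → ℝ^m`, an affine function `c : ℝ^d → ℝ` and
`α ≥ 0`, the set `{x | c(x) > 0 ∧ ‖A(x)‖ ≤ α · c(x)}` is convex; consequently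
`x ↦ ‖A(x)‖ / c(x)` is quasiconvex on `{x | c(x) > 0}`: its `α`-sublevel set
within that region is convex. -/
theorem affine_over_affine_quasiconvex
    (d m : ℕ)
    (A : (Fin d → ℝ) →ᵃ[ℝ] EuclideanSpace ℝ (Fin m))
    (c : (Fin d → ℝ) →ᵃ[ℝ] ℝ)
    (α : ℝ) (hα : 0 ≤ α) :
    Convex ℝ {x : Fin d → ℝ | 0 < c x ∧ ‖A x‖ ≤ α * c x} ∧
    Convex ℝ {x : Fin d → ℝ | 0 < c x ∧ ‖A x‖ / c x ≤ α} := by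
  have hmain : Convex ℝ {x : Fin d → ℝ | 0 < c x ∧ ‖A x‖ ≤ α * c x} := by
    intro x hx y hy a b ha hb hab
    obtain ⟨hcx, hAx⟩ := hx
    obtain ⟨hcy, hAy⟩ := hy
    have hc : c (a • x + b • y) = a * c x + b * c y := by
      simpa using Convex.combo_affine_apply (f := c) hab (x := x) (y := y)
    have hA : A (a • x + b • y) = a • A x + b • A y :=
      Convex.combo_affine_apply (f := A) hab
    have hcpos : 0 < a * c x + b * c y := by
      rcases ha.eq_or_lt with h | h
      · have hb1 : b = 1 := by linarith
        simp [← h, hb1, hcy]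
      · have := mul_pos h hcx
        have := mul_nonneg hb hcy.le
        linarith
    refine ⟨by rw [hc]; exact hcpos, ?_⟩
    rw [hA, hc]
    calc ‖a • A x + b • A y‖ ≤ ‖a • A x‖ + ‖b • A y‖ := norm_add_le _ _
      _ = a * ‖A x‖ + b * ‖A y‖ := by
          rw [norm_smul, norm_smul, Real.norm_eq_abs, Real.norm_eq_abs,
            abs_of_nonneg ha, abs_of_nonneg hb]
      _ ≤ a * (α * c x) + b * (α * c y) := by
          gcongr
      _ = α * (a * c x + b * c y) := by ring
  refine ⟨hmain, ?_⟩
  have hset : {x : Fin d → ℝ | 0 < c x ∧ ‖A x‖ / c x ≤ α}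
      = {x : Fin d → ℝ | 0 < c x ∧ ‖A x‖ ≤ α * c x} := by
    ext x
    simp only [Set.mem_setOf_eq]
    constructor
    · rintro ⟨h1, h2⟩
      exact ⟨h1, by rw [div_le_iff₀ h1] at h2; linarith⟩
    · rintro ⟨h1, h2⟩
      exact ⟨h1, by rw [div_le_iff₀ h1]; linarith⟩
  rw [hset]
  exact hmain
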